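/- Let G be an r-regular finite simple graph with n vertices and m edges. Then NK(G^{---}) = (m+n-2r-1)^(m+n). -/

import Mathlib

open Finset

variable {V : Type*}

/-- The Narumi–Katayama index: the product of the degrees of all vertices. -/
def NK {W : Type*} [Fintype W] (H : SimpleGraph W) [DecidableRel H.Adj] : ℕ :=
  ∏ v, H.degree v

/-- The first Zagreb index: the sum of the squares of the degrees. -/
def M1 [Fintype V] (G : SimpleGraph V) [DecidableRel G.Adj] : ℕ :=
  ∑ v, (G.degree v) ^ 2

/-- The multiplicative sum Zagreb index: the product over the edges of `G` of the
sum of the degrees of the two endpoints. -/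
def Pi1Star [Fintype V] [DecidableEq V] (G : SimpleGraph V) [DecidableRel G.Adj] : ℕ :=
  ∏ e ∈ G.edgeFinset,
    Sym2.lift ⟨fun u v => G.degree u + G.degree v, fun u v => by simp [Nat.add_comm]⟩ e

/-- A generic transformation graph on the vertex set `V(G) ∪ E(G)`, built from a
symmetric irreflexive relation `Rvv` between vertices, a symmetric irreflexive relation
`Ree` between edges, and an incidence relation `Rve` between vertices and edges. -/
def transGraph (G : SimpleGraph V) (Rvv : V → V → Prop) (Ree : Sym2 V → Sym2 V → Prop)
    (Rve : V → Sym2 V → Prop)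
    (hvv : Symmetric Rvv) (hvv' : Irreflexive Rvv)
    (hee : Symmetric Ree) (hee' : Irreflexive Ree) :
    SimpleGraph (V ⊕ G.edgeSet) where
  Adj a b :=
    match a, b with
    | Sum.inl u, Sum.inl v => Rvv u v
    | Sum.inr e, Sum.inr f => Ree e.1 f.1
    | Sum.inl u, Sum.inr e => Rve u e.1
    | Sum.inr e, Sum.inl u => Rve u e.1
  symm := .mk <| by
    rintro (u | e) (v | f) h
    · exact hvv h
    · exact h
    · exact h
    · exact hee h
  loopless := .mk <| by
    rintro (u | e) h
    · exact hvv' u h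
    · exact hee' e.1 h

instance transGraph.instDecidableAdj (G : SimpleGraph V) (Rvv : V → V → Prop)
    (Ree : Sym2 V → Sym2 V → Prop) (Rve : V → Sym2 V → Prop)
    (h1 : Symmetric Rvv) (h2 : Irreflexive Rvv) (h3 : Symmetric Ree) (h4 : Irreflexive Ree)
    [DecidableRel Rvv] [DecidableRel Ree] [∀ u e, Decidable (Rve u e)] :
    DecidableRel (transGraph G Rvv Ree Rve h1 h2 h3 h4).Adj := fun a b =>
  match a, b with
  | Sum.inl u, Sum.inl v => inferInstanceAs (Decidable (Rvv u v))
  | Sum.inr e, Sum.inr f => inferInstanceAs (Decidable (Ree e.1 f.1))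
  | Sum.inl u, Sum.inr e => inferInstanceAs (Decidable (Rve u e.1))
  | Sum.inr e, Sum.inl u => inferInstanceAs (Decidable (Rve u e.1))

/-- Two edges (as elements of `Sym2 V`) are adjacent: distinct and sharing an endpoint. -/
abbrev shareRel : Sym2 V → Sym2 V → Prop := fun e f => e ≠ f ∧ ∃ w, w ∈ e ∧ w ∈ f

lemma shareRel_symm : Symmetric (shareRel (V := V)) :=
  fun _ _ h => ⟨h.1.symm, h.2.imp fun _ hw => ⟨hw.2, hw.1⟩⟩

lemma shareRel_irrefl : Irreflexive (shareRel (V := V)) := fun _ h => h.1 rfl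

/-- Two edges are "non-adjacent": distinct and sharing no endpoint. -/
abbrev coshareRel : Sym2 V → Sym2 V → Prop := fun e f => e ≠ f ∧ ∀ w, w ∈ e → w ∉ f

lemma coshareRel_symm : Symmetric (coshareRel (V := V)) :=
  fun _ _ h => ⟨h.1.symm, fun w hf he => h.2 w he hf⟩

lemma coshareRel_irrefl : Irreflexive (coshareRel (V := V)) := fun _ h => h.1 rfl

/-- Non-adjacency of distinct vertices. -/
abbrev coAdj (G : SimpleGraph V) : V → V → Prop := fun u v => u ≠ v ∧ ¬ G.Adj u v

lemma coAdj_symm (G : SimpleGraph V) : Symmetric (coAdj G) :=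
  fun _ _ h => ⟨h.1.symm, fun ha => h.2 ha.symm⟩

lemma coAdj_irrefl (G : SimpleGraph V) : Irreflexive (coAdj G) := fun _ h => h.1 rfl

variable [Fintype V] [DecidableEq V]

/-- The total transformation graph `G^{---}`. -/
abbrev Gmmm (G : SimpleGraph V) [DecidableRel G.Adj] : SimpleGraph (V ⊕ G.edgeSet) :=
  transGraph G (coAdj G) coshareRel (fun u e => u ∉ e)
    (coAdj_symm G) (coAdj_irrefl G) coshareRel_symm coshareRel_irrefl

lemma Gmmm_degree_split (G : SimpleGraph V) [DecidableRel G.Adj] (x : V ⊕ G.edgeSet) :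
    (Gmmm G).degree x =
      (univ.filter fun v : V => (Gmmm G).Adj x (Sum.inl v)).card +
      (univ.filter fun e : G.edgeSet => (Gmmm G).Adj x (Sum.inr e)).card := by
  rw [← SimpleGraph.card_neighborFinset_eq_degree, SimpleGraph.neighborFinset_eq_filter,
    Finset.card_filter, Fintype.sum_sum_type, ← Finset.card_filter, ← Finset.card_filter]

lemma card_filter_subtype (G : SimpleGraph V) [DecidableRel G.Adj]
    (p : Sym2 V → Prop) [DecidablePred p] :
    ((univ : Finset G.edgeSet).filter fun e => p e.1).card = (G.edgeFinset.filter p).card := by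
  apply Finset.card_bij (fun e _ => e.1)
  · intro e he
    simp only [Finset.mem_filter, SimpleGraph.mem_edgeFinset]
    exact ⟨e.2, (Finset.mem_filter.1 he).2⟩
  · intro e₁ _ e₂ _ h
    exact Subtype.ext h
  · intro e he
    exact ⟨⟨e, SimpleGraph.mem_edgeFinset.1 (Finset.mem_filter.1 he).1⟩,
      Finset.mem_filter.2 ⟨Finset.mem_univ _, (Finset.mem_filter.1 he).2⟩, rfl⟩

lemma card_univ_edgeSet (G : SimpleGraph V) [DecidableRel G.Adj] :
    (univ : Finset G.edgeSet).card = G.edgeFinset.card := by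
  rw [Finset.card_univ, SimpleGraph.edgeFinset, Set.toFinset_card]

lemma Gmmm_deg_inl (G : SimpleGraph V) [DecidableRel G.Adj] (u : V) :
    (Gmmm G).degree (Sum.inl u) =
      G.edgeFinset.card + Fintype.card V - 2 * G.degree u - 1 := by
  rw [Gmmm_degree_split]
  -- vertex part
  have h1 : (univ.filter fun v : V => (Gmmm G).Adj (Sum.inl u) (Sum.inl v)) =
      (insert u (G.neighborFinset u))ᶜ := by
    have h0 : (univ.filter fun v : V => (Gmmm G).Adj (Sum.inl u) (Sum.inl v)) =
        univ.filter (fun v => u ≠ v ∧ ¬ G.Adj u v) :=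
      Finset.filter_congr fun v _ => Iff.rfl
    rw [h0]
    ext v
    simp [ne_comm, not_or, and_comm]
  have hsub : (insert u (G.neighborFinset u)).card ≤ Fintype.card V := by
    simpa using Finset.card_le_univ (insert u (G.neighborFinset u))
  have hins : (insert u (G.neighborFinset u)).card = G.degree u + 1 := by
    rw [Finset.card_insert_of_notMem (by simp), SimpleGraph.card_neighborFinset_eq_degree]
  -- edge part
  have h2 : ((univ : Finset G.edgeSet).filter fun e => u ∈ e.1).card = G.degree u := by
    rw [card_filter_subtype G (fun x => u ∈ x), ← SimpleGraph.incidenceFinset_eq_filter,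
      SimpleGraph.card_incidenceFinset_eq_degree]
  have h3 := Finset.card_filter_add_card_filter_not
    (s := (univ : Finset G.edgeSet)) (p := fun e => u ∈ e.1)
  rw [card_univ_edgeSet, h2] at h3
  have h4 : (univ.filter fun e : G.edgeSet => (Gmmm G).Adj (Sum.inl u) (Sum.inr e)) =
      (univ.filter fun e : G.edgeSet => ¬ u ∈ e.1) := rfl
  rw [h1, h4, Finset.card_compl, hins]
  omega

lemma Gmmm_deg_inr (G : SimpleGraph V) [DecidableRel G.Adj] {r : ℕ}
    (hreg : G.IsRegularOfDegree r) (e : G.edgeSet) :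
    (Gmmm G).degree (Sum.inr e) =
      G.edgeFinset.card + Fintype.card V - 2 * r - 1 := by
  obtain ⟨e, he⟩ := e
  induction e using Sym2.ind with
  | _ a b =>
  have hab : G.Adj a b := G.mem_edgeSet.1 he
  have hne : a ≠ b := hab.ne
  rw [Gmmm_degree_split]
  -- vertex part
  have h1 : (univ.filter fun v : V =>
      (Gmmm G).Adj (Sum.inr ⟨s(a, b), he⟩) (Sum.inl v)) = ({a, b} : Finset V)ᶜ := by
    have h0 : (univ.filter fun v : V => (Gmmm G).Adj (Sum.inr ⟨s(a, b), he⟩) (Sum.inl v)) =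
        univ.filter (fun v => ¬ v ∈ s(a, b)) :=
      Finset.filter_congr fun v _ => Iff.rfl
    rw [h0]
    ext v
    simp [Sym2.mem_iff, not_or]
  have hn2 : 2 ≤ Fintype.card V := by
    have := Finset.card_le_univ ({a, b} : Finset V)
    rwa [Finset.card_pair hne] at this
  -- edge part
  have h2 : (univ.filter fun f : G.edgeSet =>
      (Gmmm G).Adj (Sum.inr ⟨s(a, b), he⟩) (Sum.inr f)) =
      (univ.filter fun f : G.edgeSet => ¬ (a ∈ f.1 ∨ b ∈ f.1)) := by
    ext f
    simp only [Finset.mem_filter, Finset.mem_univ, true_and]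
    show s(a, b) ≠ f.1 ∧ (∀ w, w ∈ s(a, b) → w ∉ f.1) ↔ _
    constructor
    · rintro ⟨-, h⟩
      push_neg
      exact ⟨h a (by simp), h b (by simp)⟩
    · rintro h
      push_neg at h
      refine ⟨fun hef => h.1 (hef ▸ by simp), ?_⟩
      intro w hw
      rcases Sym2.mem_iff.1 hw with rfl | rfl
      · exact h.1
      · exact h.2
  have h3 : ((univ : Finset G.edgeSet).filter fun f => a ∈ f.1 ∨ b ∈ f.1).card + 1 = 2 * r := by
    rw [card_filter_subtype G (fun f => a ∈ f ∨ b ∈ f), Finset.filter_or,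
      ← SimpleGraph.incidenceFinset_eq_filter, ← SimpleGraph.incidenceFinset_eq_filter]
    have hint : G.incidenceFinset a ∩ G.incidenceFinset b = {s(a, b)} := by
      ext f
      simp only [Finset.mem_inter, SimpleGraph.mem_incidenceFinset, Finset.mem_singleton,
        SimpleGraph.incidenceSet, Set.mem_setOf_eq, Set.mem_sep_iff]
      constructor
      · rintro ⟨⟨-, ha⟩, ⟨-, hb⟩⟩
        exact (Sym2.mem_and_mem_iff hne).1 ⟨ha, hb⟩
      · rintro rfl
        exact ⟨⟨he, by simp⟩, ⟨he, by simp⟩⟩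
    have := Finset.card_union_add_card_inter (G.incidenceFinset a) (G.incidenceFinset b)
    rw [hint, Finset.card_singleton, SimpleGraph.card_incidenceFinset_eq_degree,
      SimpleGraph.card_incidenceFinset_eq_degree, hreg a, hreg b] at this
    omega
  have h4 := Finset.card_filter_add_card_filter_not
    (s := (univ : Finset G.edgeSet)) (p := fun f => a ∈ f.1 ∨ b ∈ f.1)
  rw [card_univ_edgeSet] at h4
  rw [h1, h2, Finset.card_compl, Finset.card_pair hne]
  omega

theorem stmt_8 (G : SimpleGraph V) [DecidableRel G.Adj]
    (r : ℕ)
    (hreg : G.IsRegularOfDegree r) :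
    NK (Gmmm G) = (G.edgeFinset.card + Fintype.card V - 2 * r - 1) ^ (G.edgeFinset.card + Fintype.card V) := by
  set c := G.edgeFinset.card + Fintype.card V - 2 * r - 1 with hc
  rw [NK, Fintype.prod_sum_type]
  have hl : ∀ v : V, (Gmmm G).degree (Sum.inl v) = c := fun v => by
    rw [Gmmm_deg_inl, hreg v]
  have hr : ∀ e : G.edgeSet, (Gmmm G).degree (Sum.inr e) = c :=
    fun e => Gmmm_deg_inr G hreg e
  simp only [hl, hr, Finset.prod_const, Finset.card_univ]
  rw [← pow_add]
  congr 1
  have : Fintype.card G.edgeSet = G.edgeFinset.card := by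
    rw [SimpleGraph.edgeFinset, Set.toFinset_card]
  omega
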